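/- Let A ∈ ℝ^{n×n} be symmetric and invertible, W ∈ ℝ^{n×n} symmetric positive definite, S ∈ ℝ^{n×q} of full column rank, and X_k ∈ ℝ^{n×n} symmetric. Set Λ := (S^T A W A S)^{-1} and X_{k+1} := X_k − (X_k A − I) S Λ S^T A W + W A S Λ S^T (A X_k − I)(A S Λ S^T A W − I). Then X_{k+1} is a minimizer of ‖X − A^{-1}‖_{F(W^{-1})} over the affine set {X_k + (1/2)(Y S^T A W + W A^T S Y^T) : Y ∈ ℝ^{n×q}}; i.e., for every Y ∈ ℝ^{n×q} one has ‖X_{k+1} − A^{-1}‖_{F(W^{-1})} ≤ ‖X_k + (1/2)(Y S^T A W + W A^T S Y^T) − A^{-1}‖_{F(W^{-1})}. -/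

import Mathlib

open Matrix BigOperators

/-- Squared weighted Frobenius norm: `‖X‖_{F(W⁻¹)}² = Tr(Xᵀ W⁻¹ X W⁻¹)`. -/
noncomputable def wFNormSq {n : ℕ} (W X : Matrix (Fin n) (Fin n) ℝ) : ℝ :=
  (Xᵀ * W⁻¹ * X * W⁻¹).trace

/-- Weighted Frobenius norm `‖X‖_{F(W⁻¹)}`. -/
noncomputable def wFNorm {n : ℕ} (W X : Matrix (Fin n) (Fin n) ℝ) : ℝ :=
  Real.sqrt (wFNormSq W X)

set_option maxHeartbeats 1000000 in
theorem stmt4 {n q : ℕ} (A W : Matrix (Fin n) (Fin n) ℝ)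
    (S : Matrix (Fin n) (Fin q) ℝ) (Xk : Matrix (Fin n) (Fin n) ℝ)
    (hA : IsUnit A.det) (hAsym : Aᵀ = A) (hW : W.PosDef) (hS : S.rank = q)
    (hXk : Xkᵀ = Xk) :
    let Λ := (Sᵀ * A * W * A * S)⁻¹
    let Xnext := Xk - (Xk * A - 1) * S * Λ * Sᵀ * A * W +
      W * A * S * Λ * Sᵀ * (A * Xk - 1) * (A * S * Λ * Sᵀ * A * W - 1)
    ∀ Y : Matrix (Fin n) (Fin q) ℝ,
      wFNorm W (Xnext - A⁻¹) ≤
        wFNorm W ((Xk + (1 / 2 : ℝ) • (Y * Sᵀ * A * W + W * Aᵀ * S * Yᵀ)) - A⁻¹) := by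
  intro Λ Xnext Y
  -- square root of W
  open scoped MatrixOrder in set R := CFC.sqrt W with hRdef
  have hRR : R * R = W := by
    open scoped MatrixOrder in exact CFC.sqrt_mul_sqrt_self W (Matrix.nonneg_iff_posSemidef.mpr hW.posSemidef)
  have hRsym : Rᵀ = R := by
    rw [← conjTranspose_eq_transpose_of_trivial]
    open scoped MatrixOrder in exact (Matrix.nonneg_iff_posSemidef.mp (CFC.sqrt_nonneg W)).1
  have hWsym : Wᵀ = W := by
    rw [← conjTranspose_eq_transpose_of_trivial]; exact hW.1
  have hRdet : IsUnit R.det := by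
    have h1 : R.det * R.det = W.det := by rw [← det_mul, hRR]
    have h2 : W.det ≠ 0 := hW.det_pos.ne'
    exact isUnit_iff_ne_zero.mpr (fun h => h2 (by rw [← h1, h, zero_mul]))
  set T := R⁻¹ with hTdef
  have hRT : R * T = 1 := mul_nonsing_inv R hRdet
  have hTR : T * R = 1 := nonsing_inv_mul R hRdet
  have hTsym : Tᵀ = T := by rw [hTdef, transpose_nonsing_inv, hRsym]
  have hWinv : W⁻¹ = T * T := by rw [← hRR, Matrix.mul_inv_rev]
  have hAA : A * A⁻¹ = 1 := mul_nonsing_inv A hA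
  have hA'A : A⁻¹ * A = 1 := nonsing_inv_mul A hA
  have hAinvSym : A⁻¹ᵀ = A⁻¹ := by rw [transpose_nonsing_inv, hAsym]
  -- cancellation helpers
  have cRT : ∀ (X : Matrix (Fin n) (Fin n) ℝ), R * (T * X) = X := fun X => by
    rw [← Matrix.mul_assoc, hRT, Matrix.one_mul]
  have cTR : ∀ (X : Matrix (Fin n) (Fin n) ℝ), T * (R * X) = X := fun X => by
    rw [← Matrix.mul_assoc, hTR, Matrix.one_mul]
  have hWT : W * T = R := by rw [← hRR, Matrix.mul_assoc, hRT, Matrix.mul_one]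
  have cTW : ∀ (X : Matrix (Fin n) (Fin n) ℝ), T * (W * X) = R * X := fun X => by
    rw [← Matrix.mul_assoc, ← hRR, ← Matrix.mul_assoc, hTR, Matrix.one_mul]
  -- M is positive definite hence invertible
  set M := Sᵀ * A * W * A * S with hMdef
  have hΛdef : Λ = M⁻¹ := rfl
  set V : Matrix (Fin n) (Fin q) ℝ := R * A * S with hVdef
  have hVT : Vᵀ = Sᵀ * A * R := by
    rw [hVdef, Matrix.transpose_mul, Matrix.transpose_mul, hAsym, hRsym, Matrix.mul_assoc]
  have hMV : M = Vᵀ * V := by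
    rw [hVT, hVdef, hMdef, ← hRR]
    simp only [Matrix.mul_assoc]
  -- injectivity of S
  have hSinj : ∀ x : Fin q → ℝ, S *ᵥ x = 0 → x = 0 := by
    have hker : LinearMap.ker S.mulVecLin = ⊥ := by
      have h1 := LinearMap.finrank_range_add_finrank_ker S.mulVecLin
      rw [Matrix.rank] at hS
      rw [hS, Module.finrank_pi] at h1
      simp only [Fintype.card_fin] at h1
      have h2 : Module.finrank ℝ (LinearMap.ker S.mulVecLin) = 0 := by omega
      exact Submodule.finrank_eq_zero.mp h2
    intro x hx
    have hx' : S.mulVecLin x = 0 := hx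
    exact (LinearMap.ker_eq_bot.mp hker) (by simpa using hx')
  have hVinj : ∀ x : Fin q → ℝ, x ≠ 0 → V *ᵥ x ≠ 0 := by
    intro x hx hVx
    apply hx
    apply hSinj
    have h1 : V *ᵥ x = R *ᵥ (A *ᵥ (S *ᵥ x)) := by
      rw [hVdef, ← Matrix.mulVec_mulVec, ← Matrix.mulVec_mulVec]
    rw [h1] at hVx
    have hRinj := Matrix.mulVec_injective_iff_isUnit.mpr ((Matrix.isUnit_iff_isUnit_det R).mpr hRdet)
    have hAinj := Matrix.mulVec_injective_iff_isUnit.mpr ((Matrix.isUnit_iff_isUnit_det A).mpr hA)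
    have h2 : A *ᵥ (S *ᵥ x) = 0 := by
      apply hRinj
      simpa using hVx
    apply hAinj
    simpa using h2
  have hMpos : M.PosDef := by
    refine Matrix.PosDef.of_dotProduct_mulVec_pos ?_ ?_
    · show Mᴴ = M
      rw [conjTranspose_eq_transpose_of_trivial, hMdef]
      simp only [Matrix.transpose_mul, Matrix.transpose_transpose, hAsym, hWsym]
      simp only [Matrix.mul_assoc]
    · intro x hx
      have h1 : M *ᵥ x = Vᵀ *ᵥ (V *ᵥ x) := by rw [hMV, ← Matrix.mulVec_mulVec]
      rw [h1, star_trivial]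
      rw [Matrix.dotProduct_mulVec, Matrix.vecMul_transpose]
      have h2 : V *ᵥ x ≠ 0 := hVinj x hx
      have h3 : 0 ≤ (V *ᵥ x) ⬝ᵥ (V *ᵥ x) := by
        apply Finset.sum_nonneg
        intro i _
        exact mul_self_nonneg _
      rcases h3.lt_or_eq with h | h
      · exact h
      · exact absurd (dotProduct_self_eq_zero.mp h.symm) h2
  have hMdet : IsUnit M.det := hMpos.det_pos.ne'.isUnit
  have hMΛ : M * Λ = 1 := by rw [hΛdef]; exact mul_nonsing_inv M hMdet
  have hΛM : Λ * M = 1 := by rw [hΛdef]; exact nonsing_inv_mul M hMdet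
  have hMsym : Mᵀ = M := by
    rw [hMdef]
    simp only [Matrix.transpose_mul, Matrix.transpose_transpose, hAsym, hWsym]
    simp only [Matrix.mul_assoc]
  have hΛsym : Λᵀ = Λ := by rw [hΛdef, transpose_nonsing_inv, hMsym]
  -- key matrices
  set G : Matrix (Fin n) (Fin n) ℝ := S * Λ * Sᵀ with hGdef
  have hGsym : Gᵀ = G := by
    rw [hGdef]
    simp only [Matrix.transpose_mul, hΛsym, Matrix.transpose_transpose]
    simp only [Matrix.mul_assoc]
  set P : Matrix (Fin n) (Fin n) ℝ := R * A * G * A * R with hPdef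
  have hPsym : Pᵀ = P := by
    rw [hPdef]
    simp only [Matrix.transpose_mul, hAsym, hRsym, hGsym]
    simp only [Matrix.mul_assoc]
  -- G * A * W * A * G = G  (from Λ * M = 1)
  have hGWG : G * A * W * A * G = G := by
    rw [hGdef]
    have e1 : S * Λ * Sᵀ * A * W * A * (S * Λ * Sᵀ) = S * (Λ * M) * Λ * Sᵀ := by
      rw [hMdef]; simp only [Matrix.mul_assoc]
    rw [e1, hΛM, Matrix.mul_one]
  have hPP : P * P = P := by
    rw [hPdef]
    have e1 : R * A * G * A * R * (R * A * G * A * R)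
        = R * A * (G * A * W * A * G) * A * R := by
      rw [← hRR]; simp only [Matrix.mul_assoc]
    rw [e1, hGWG]
  set Ek : Matrix (Fin n) (Fin n) ℝ := Xk - A⁻¹ with hEkdef
  set B : Matrix (Fin n) (Fin n) ℝ := T * Ek * T with hBdef
  have hEksym : Ekᵀ = Ek := by rw [hEkdef, Matrix.transpose_sub, hXk, hAinvSym]
  have hBsym : Bᵀ = B := by
    rw [hBdef]
    simp only [Matrix.transpose_mul, hTsym, hEksym]
    simp only [Matrix.mul_assoc]
  set E : Matrix (Fin n) (Fin n) ℝ := (1 - P) * B * (1 - P) with hEdef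
  have hEsym : Eᵀ = E := by
    rw [hEdef]
    simp only [Matrix.transpose_mul, Matrix.transpose_sub, Matrix.transpose_one, hPsym, hBsym]
    simp only [Matrix.mul_assoc]
  -- annihilation
  have h1P : (1 - P) * (1 - P) = 1 - P := by
    rw [Matrix.sub_mul, Matrix.mul_sub, Matrix.mul_sub, hPP]
    simp only [Matrix.one_mul, Matrix.mul_one]
    abel
  -- (Sᵀ * A * R) * (1 - P) = 0
  have hSAR : Sᵀ * A * R * (1 - P) = 0 := by
    rw [Matrix.mul_sub, Matrix.mul_one, sub_eq_zero, hPdef, hGdef]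
    have e1 : Sᵀ * A * R * (R * A * (S * Λ * Sᵀ) * A * R)
        = M * Λ * (Sᵀ * (A * R)) := by
      rw [hMdef, ← hRR]; simp only [Matrix.mul_assoc]
    rw [e1, hMΛ, Matrix.one_mul]
    simp only [Matrix.mul_assoc]
  have h1PV : (1 - P) * (R * A * S) = 0 := by
    have h := congrArg Matrix.transpose hSAR
    rw [Matrix.transpose_mul, Matrix.transpose_sub, Matrix.transpose_one, hPsym,
      Matrix.transpose_mul, Matrix.transpose_mul, hAsym, hRsym, Matrix.transpose_transpose,
      Matrix.transpose_zero] at h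
    rw [show (1 : Matrix (Fin n) (Fin n) ℝ) - P = (1 - P) * 1 by rw [Matrix.mul_one]] at h ⊢
    calc (1 - P) * 1 * (R * A * S) = (1 - P) * (R * (A * S)) := by simp only [Matrix.mul_assoc,
          Matrix.one_mul, Matrix.mul_one]
      _ = 0 := by rw [← h]; simp only [Matrix.mul_assoc, Matrix.mul_one, Matrix.one_mul]
  have hSARE : Sᵀ * A * R * E = 0 := by
    rw [hEdef, show Sᵀ * A * R * ((1 - P) * B * (1 - P)) =
      (Sᵀ * A * R * (1 - P)) * (B * (1 - P)) by simp only [Matrix.mul_assoc], hSAR,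
      Matrix.zero_mul]
  have hEV : E * (R * A * S) = 0 := by
    rw [hEdef, Matrix.mul_assoc, Matrix.mul_assoc, h1PV, Matrix.mul_zero, Matrix.mul_zero]
  -- weighted norm as Frobenius norm of conjugated matrix
  have hWF : ∀ X : Matrix (Fin n) (Fin n) ℝ,
      wFNormSq W X = ((T * X * T)ᵀ * (T * X * T)).trace := by
    intro X
    unfold wFNormSq
    rw [hWinv]
    rw [show Xᵀ * (T * T) * X * (T * T) = (Xᵀ * T * T * X * T) * T by
      simp only [Matrix.mul_assoc]]
    rw [Matrix.trace_mul_comm (Xᵀ * T * T * X * T) T]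
    congr 1
    simp only [Matrix.transpose_mul, hTsym]
    simp only [Matrix.mul_assoc]
  -- the next iterate's error
  have h1 : Xk * A - 1 = Ek * A := by
    rw [hEkdef, Matrix.sub_mul, hA'A]
  have h2 : A * Xk - 1 = A * Ek := by
    rw [hEkdef, Matrix.mul_sub, hAA]
  have hXnext : Xnext - A⁻¹ =
      Ek - Ek * (A * G * A * W) + (W * A * G * A) * Ek * (A * G * A * W) -
        (W * A * G * A) * Ek := by
    show Xk - (Xk * A - 1) * S * Λ * Sᵀ * A * W +
      W * A * S * Λ * Sᵀ * (A * Xk - 1) * (A * S * Λ * Sᵀ * A * W - 1) - A⁻¹ = _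
    rw [show Xk - (Xk * A - 1) * S * Λ * Sᵀ * A * W +
      W * A * S * Λ * Sᵀ * (A * Xk - 1) * (A * S * Λ * Sᵀ * A * W - 1) - A⁻¹
      = Ek - (Xk * A - 1) * S * Λ * Sᵀ * A * W +
        W * A * S * Λ * Sᵀ * (A * Xk - 1) * (A * S * Λ * Sᵀ * A * W - 1) by
      rw [hEkdef]; abel]
    rw [h1, h2, hGdef]
    rw [Matrix.mul_sub, Matrix.mul_one]
    simp only [Matrix.mul_assoc]
    abel
  have hEnext : T * (Xnext - A⁻¹) * T = E := by
    rw [hXnext, hEdef, hBdef, hPdef]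
    simp only [Matrix.mul_sub, Matrix.sub_mul, Matrix.mul_add, Matrix.add_mul,
      Matrix.mul_one, Matrix.one_mul]
    simp only [Matrix.mul_assoc, cTR, cRT, cTW, hWT]
    abel
  -- the candidate's error
  set Cand : Matrix (Fin n) (Fin n) ℝ :=
    Xk + (1 / 2 : ℝ) • (Y * Sᵀ * A * W + W * Aᵀ * S * Yᵀ) - A⁻¹ with hCdef
  set F : Matrix (Fin n) (Fin n) ℝ := T * Cand * T with hFdef
  have hF : F = B + (1 / 2 : ℝ) • (T * Y * (Sᵀ * A * R) + (R * A * S) * (Yᵀ * T)) := by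
    rw [hFdef, hCdef, hBdef, hEkdef]
    rw [show Xk + (1 / 2 : ℝ) • (Y * Sᵀ * A * W + W * Aᵀ * S * Yᵀ) - A⁻¹
      = (Xk - A⁻¹) + (1 / 2 : ℝ) • (Y * Sᵀ * A * W + W * Aᵀ * S * Yᵀ) by abel]
    simp only [Matrix.mul_add, Matrix.add_mul, mul_smul_comm, smul_mul_assoc]
    simp only [hAsym, Matrix.mul_assoc, cTR, cRT, cTW, hWT]
  -- trace identities
  have hEEtr : (E * E).trace = (E * B).trace := by
    have e1 : E * E = E * B * (1 - P) := by
      conv_lhs => rw [hEdef]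
      rw [show (1 - P) * B * (1 - P) * ((1 - P) * B * (1 - P))
        = (1 - P) * B * ((1 - P) * (1 - P)) * (B * (1 - P)) by simp only [Matrix.mul_assoc],
        h1P, ← hEdef]
      simp only [Matrix.mul_assoc]
    rw [e1, Matrix.trace_mul_comm, ← Matrix.mul_assoc]
    congr 1
    conv_lhs => rw [hEdef]
    rw [show (1 - P) * ((1 - P) * B * (1 - P)) = ((1 - P) * (1 - P)) * B * (1 - P) by
      simp only [Matrix.mul_assoc], h1P, ← hEdef]
  have hEFtr : (E * F).trace = (E * B).trace := by
    rw [hF, Matrix.mul_add, Matrix.trace_add, mul_smul_comm, Matrix.trace_smul]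
    have t1 : (E * (T * Y * (Sᵀ * A * R))).trace = 0 := by
      rw [show E * (T * Y * (Sᵀ * A * R)) = (E * (T * Y)) * (Sᵀ * A * R) by
        simp only [Matrix.mul_assoc], Matrix.trace_mul_comm,
        show Sᵀ * A * R * (E * (T * Y)) = (Sᵀ * A * R * E) * (T * Y) by
        simp only [Matrix.mul_assoc], hSARE, Matrix.zero_mul, Matrix.trace_zero]
    have t2 : (E * ((R * A * S) * (Yᵀ * T))).trace = 0 := by
      rw [show E * ((R * A * S) * (Yᵀ * T)) = (E * (R * A * S)) * (Yᵀ * T) by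
        simp only [Matrix.mul_assoc], hEV, Matrix.zero_mul, Matrix.trace_zero]
    rw [Matrix.mul_add, Matrix.trace_add, t1, t2]
    simp
  -- cross terms vanish
  have hcross : (Eᵀ * (F - E)).trace = 0 := by
    rw [hEsym, Matrix.mul_sub, Matrix.trace_sub, hEFtr, hEEtr, sub_self]
  have hcross' : ((F - E)ᵀ * E).trace = 0 := by
    rw [show (F - E)ᵀ * E = (Eᵀ * (F - E))ᵀ by
      rw [Matrix.transpose_mul, Matrix.transpose_transpose], Matrix.trace_transpose]
    exact hcross
  -- nonnegativity of Frobenius traces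
  have htrnn : ∀ X : Matrix (Fin n) (Fin n) ℝ, 0 ≤ (Xᵀ * X).trace := by
    intro X
    unfold Matrix.trace
    apply Finset.sum_nonneg
    intro i _
    simp only [Matrix.diag_apply, Matrix.mul_apply, Matrix.transpose_apply]
    apply Finset.sum_nonneg
    intro j _
    exact mul_self_nonneg _
  -- splitting
  have hsplit : (Fᵀ * F).trace = (Eᵀ * E).trace + ((F - E)ᵀ * (F - E)).trace := by
    have e1 : Fᵀ * F = (E + (F - E))ᵀ * (E + (F - E)) := by rw [add_sub_cancel]
    rw [e1, Matrix.transpose_add, Matrix.add_mul, Matrix.mul_add, Matrix.mul_add]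
    rw [Matrix.trace_add, Matrix.trace_add, Matrix.trace_add, hcross, hcross']
    ring
  -- conclusion
  have hkey : wFNormSq W (Xnext - A⁻¹) ≤ wFNormSq W Cand := by
    rw [hWF, hWF, hEnext, ← hFdef, hsplit]
    have := htrnn (F - E)
    linarith
  rw [wFNorm, wFNorm]
  exact Real.sqrt_le_sqrt hkey
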